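/- arXiv:2403.06564 — 4 statements merged into one kernel-verified Lean document; each statement's English description precedes it below -/
import Mathlib

section
/- Let f = (f₁, f₂) : M → ℝ² be continuous, p₁ ∈ RG_{f₁}, C = q_{f₁}⁻¹(p₁), f̃₂ = f₂|C. Identifying RG_{f̃₂} with its image under the canonical injection φ : RG_{f̃₂} → RS_f, one has the equality of sets RG_{f̃₂} = ω₁⁻¹(p₁), where ω₁ : RS_f → RG_{f₁} is the induced projection. -/
open Set Topology

variable {M : Type*} [TopologicalSpace M]

/-- The fiber-component equivalence relation of a map `g`: `x ~ y` iff `y` lies in the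
connected component of `x` within the fiber `g ⁻¹' {g x}`. -/
def reebSetoid {T : Type*} (g : M → T) : Setoid M where
  r x y := y ∈ connectedComponentIn (g ⁻¹' {g x}) x
  iseqv := by
    constructor
    · intro x
      exact mem_connectedComponentIn rfl
    · intro x y h
      have hy : y ∈ g ⁻¹' {g x} := connectedComponentIn_subset (g ⁻¹' {g x}) x h
      have hgy : g y = g x := hy
      have hx : x ∈ connectedComponentIn (g ⁻¹' {g x}) y := by
        rw [← connectedComponentIn_eq h]
        exact mem_connectedComponentIn rfl
      show x ∈ connectedComponentIn (g ⁻¹' {g y}) y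
      rwa [hgy]
    · intro x y z hxy hyz
      have hy : y ∈ g ⁻¹' {g x} := connectedComponentIn_subset (g ⁻¹' {g x}) x hxy
      have hgy : g y = g x := hy
      show z ∈ connectedComponentIn (g ⁻¹' {g x}) x
      rw [connectedComponentIn_eq hxy]
      have : z ∈ connectedComponentIn (g ⁻¹' {g y}) y := hyz
      rwa [hgy] at this

/-- The Reeb quotient (Reeb space / Reeb graph) of a map `g`. -/
def ReebQuot {T : Type*} (g : M → T) : Type _ := Quotient (reebSetoid g)

instance {T : Type*} (g : M → T) : TopologicalSpace (ReebQuot g) :=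
  instTopologicalSpaceQuotient

/-- The quotient map onto the Reeb quotient. -/
def reebMk {T : Type*} (g : M → T) : M → ReebQuot g := Quotient.mk (reebSetoid g)

/-- Fiber components of a finer map are contained in fiber components of a coarser map. -/
theorem reeb_descend {T S : Type*} {g : M → T} {g' : M → S}
    (hg : ∀ a b, g a = g b → g' a = g' b) {x y : M}
    (h : (reebSetoid g).r x y) : (reebSetoid g').r x y := by
  have hsub : g ⁻¹' {g x} ⊆ g' ⁻¹' {g' x} := by
    intro z hz
    simp only [mem_preimage, mem_singleton_iff] at hz ⊢
    exact hg z x hz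
  exact connectedComponentIn_mono x hsub h

/-- The map `ω₁ : RS_f → RG_{f₁}` induced on Reeb quotients. -/
def omega1 (f₁ f₂ : M → ℝ) : ReebQuot (fun m => (f₁ m, f₂ m)) → ReebQuot f₁ :=
  Quotient.lift (reebMk f₁)
    (fun _ _ hab => Quot.sound (reeb_descend (fun _ _ huv => congrArg Prod.fst huv) hab))

/-- The map `ω₂ : RS_f → RG_{f₂}` induced on Reeb quotients. -/
def omega2 (f₁ f₂ : M → ℝ) : ReebQuot (fun m => (f₁ m, f₂ m)) → ReebQuot f₂ :=
  Quotient.lift (reebMk f₂)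
    (fun _ _ hab => Quot.sound (reeb_descend (fun _ _ huv => congrArg Prod.snd huv) hab))

/-- The induced map `f̄ : ReebQuot g → T` with `f̄ ∘ q_g = g`. -/
def reebLift {T : Type*} (g : M → T) : ReebQuot g → T :=
  Quotient.lift g (fun a b hab => by
    have : b ∈ g ⁻¹' {g a} := connectedComponentIn_subset (g ⁻¹' {g a}) a hab
    exact (show g b = g a from this).symm)


/-- identifying `RG_{f̃₂}` with its image under `φ`, one has
`RG_{f̃₂} = ω₁⁻¹(p₁)` as sets. -/
theorem phi_range_eq_fiber {M : Type*} [TopologicalSpace M] (f₁ f₂ : M → ℝ)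
    (hf₁ : Continuous f₁) (hf₂ : Continuous f₂) (p₁ : ReebQuot f₁) :
    ∃ φ : ReebQuot (fun c : (reebMk f₁ ⁻¹' {p₁} : Set M) => f₂ c.1) → ReebQuot (fun m => (f₁ m, f₂ m)),
      (∀ c : (reebMk f₁ ⁻¹' {p₁} : Set M), φ (reebMk (fun c : (reebMk f₁ ⁻¹' {p₁} : Set M) => f₂ c.1) c) = reebMk (fun m => (f₁ m, f₂ m)) c.1) ∧ Set.range φ = omega1 f₁ f₂ ⁻¹' {p₁} := by
  set C : Set M := reebMk f₁ ⁻¹' {p₁} with hC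
  -- f₁ is constant on C
  have hconst : ∀ x ∈ C, ∀ y ∈ C, f₁ x = f₁ y := by
    intro x hx y hy
    have hxy : reebMk f₁ x = reebMk f₁ y := by
      simp only [hC, mem_preimage, mem_singleton_iff] at hx hy
      rw [hx, hy]
    have hr : (reebSetoid f₁).r x y := Quotient.exact hxy
    have : y ∈ f₁ ⁻¹' {f₁ x} := connectedComponentIn_subset _ _ hr
    exact (show f₁ y = f₁ x from this).symm
  -- well-definedness of φ
  have hwf : ∀ a b : C, (reebSetoid (fun c : C => f₂ c.1)).r a b →
      (reebSetoid (fun m => (f₁ m, f₂ m))).r a.1 b.1 := by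
    intro a b hab
    have hsub : (fun c : C => f₂ c.1) ⁻¹' {f₂ a.1} = Subtype.val ⁻¹' (f₂ ⁻¹' {f₂ a.1}) := rfl
    have himg : (Subtype.val : C → M) '' connectedComponentIn
        ((fun c : C => f₂ c.1) ⁻¹' {f₂ a.1}) a ⊆
        connectedComponentIn ((Subtype.val : C → M) '' (Subtype.val ⁻¹' (f₂ ⁻¹' {f₂ a.1}))) a.1 := by
      rw [hsub]
      exact Continuous.image_connectedComponentIn_subset continuous_subtype_val rfl
    have hb : b.1 ∈ connectedComponentIn
        ((Subtype.val : C → M) '' (Subtype.val ⁻¹' (f₂ ⁻¹' {f₂ a.1}))) a.1 :=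
      himg ⟨b, hab, rfl⟩
    have hset : (Subtype.val : C → M) '' (Subtype.val ⁻¹' (f₂ ⁻¹' {f₂ a.1})) ⊆
        (fun m => (f₁ m, f₂ m)) ⁻¹' {(f₁ a.1, f₂ a.1)} := by
      rintro x ⟨⟨x, hxC⟩, hx2, rfl⟩
      simp only [mem_preimage, mem_singleton_iff] at hx2 ⊢
      exact Prod.ext (hconst x hxC a.1 a.2) hx2
    exact connectedComponentIn_mono a.1 hset hb
  refine ⟨Quotient.lift (fun c : C => reebMk (fun m => (f₁ m, f₂ m)) c.1)
    (fun a b hab => Quot.sound (hwf a b hab)), fun c => rfl, ?_⟩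
  ext y
  constructor
  · rintro ⟨z, rfl⟩
    obtain ⟨c, rfl⟩ := Quotient.exists_rep z
    show omega1 f₁ f₂ (reebMk (fun m => (f₁ m, f₂ m)) c.1) = p₁
    exact c.2
  · intro hy
    obtain ⟨m, rfl⟩ := Quotient.exists_rep y
    have hm : m ∈ C := hy
    exact ⟨reebMk (fun c : C => f₂ c.1) ⟨m, hm⟩, rfl⟩
end

section
/- Let M be a compact topological space, f = (f₁, f₂) : M → ℝ² continuous, and p₁ ∈ RG_{f₁}. Then the canonical injection φ : RG_{f̃₂} → RS_f is a closed map: for every closed subset A of RG_{f̃₂}, φ(A) is closed in RS_f. -/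
open Set Topology

variable {M : Type*} [TopologicalSpace M]

/-- A fiber component in a closed set is closed. -/
theorem isClosed_connectedComponentIn_aux {X : Type*} [TopologicalSpace X] {F : Set X}
    (hF : IsClosed F) (x : X) : IsClosed (connectedComponentIn F x) := by
  rw [connectedComponentIn]
  split_ifs with h
  · exact (hF.isClosedEmbedding_subtypeVal.isClosedMap _ isClosed_connectedComponent)
  · exact isClosed_empty

theorem f₁_const_of_reebMk_eq {M : Type*} [TopologicalSpace M] {f₁ : M → ℝ} {x y : M}
    (h : reebMk f₁ x = reebMk f₁ y) : f₁ x = f₁ y := by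
  have hr : (reebSetoid f₁).r x y := Quotient.exact h
  exact ((connectedComponentIn_subset (f₁ ⁻¹' {f₁ x}) x hr : f₁ y = f₁ x)).symm

theorem phi_closedMap {M : Type*} [TopologicalSpace M] [CompactSpace M] (f₁ f₂ : M → ℝ)
    (hf₁ : Continuous f₁) (hf₂ : Continuous f₂) (p₁ : ReebQuot f₁) :
    ∃ φ : ReebQuot (fun c : (reebMk f₁ ⁻¹' {p₁} : Set M) => f₂ c.1) → ReebQuot (fun m => (f₁ m, f₂ m)),
      (∀ c : (reebMk f₁ ⁻¹' {p₁} : Set M), φ (reebMk (fun c : (reebMk f₁ ⁻¹' {p₁} : Set M) => f₂ c.1) c) = reebMk (fun m => (f₁ m, f₂ m)) c.1) ∧ IsClosedMap φ := by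
  classical
  set C : Set M := reebMk f₁ ⁻¹' {p₁} with hCdef
  set g : C → ℝ := fun c => f₂ c.1 with hgdef
  set f : M → ℝ × ℝ := fun m => (f₁ m, f₂ m) with hfdef
  -- `f₁` is constant on `C`
  have hf₁C : ∀ x y : C, f₁ x.1 = f₁ y.1 := fun x y =>
    f₁_const_of_reebMk_eq (x.2.trans y.2.symm)
  -- Step A: well-definedness of φ
  have keyA : ∀ a b : C, (reebSetoid g).r a b → (reebSetoid f).r a.1 b.1 := by
    intro a b hab
    set S : Set M := Subtype.val '' connectedComponentIn (g ⁻¹' {g a}) a with hSdef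
    have hSpre : IsPreconnected S :=
      isPreconnected_connectedComponentIn.image _ continuous_subtype_val.continuousOn
    have haS : a.1 ∈ S := ⟨a, mem_connectedComponentIn rfl, rfl⟩
    have hSsub : S ⊆ f ⁻¹' {f a.1} := by
      rintro z ⟨c, hc, rfl⟩
      have h2' : c ∈ g ⁻¹' {g a} := connectedComponentIn_subset (g ⁻¹' {g a}) a hc
      have h2 : f₂ c.1 = f₂ a.1 := h2'
      have h1 : f₁ c.1 = f₁ a.1 := hf₁C c a
      simp only [hfdef, mem_preimage, mem_singleton_iff, Prod.mk.injEq]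
      exact ⟨h1, h2⟩
    have hb : b.1 ∈ S := ⟨b, hab, rfl⟩
    exact hSpre.subset_connectedComponentIn haS hSsub hb
  -- Step B: converse
  have keyB : ∀ (a : C) (m : M), (reebSetoid f).r a.1 m →
      ∃ hm : m ∈ C, (reebSetoid g).r a ⟨m, hm⟩ := by
    intro a m ham
    set K : Set M := connectedComponentIn (f ⁻¹' {f a.1}) a.1 with hKdef
    have hKC : K ⊆ C := by
      intro z hz
      have hr : (reebSetoid f₁).r a.1 z :=
        reeb_descend (fun u v huv => congrArg Prod.fst huv) (hz : (reebSetoid f).r a.1 z)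
      have : reebMk f₁ z = reebMk f₁ a.1 := (Quot.sound hr).symm
      show reebMk f₁ z ∈ ({p₁} : Set (ReebQuot f₁))
      rw [this]; exact a.2
    set K' : Set C := Subtype.val ⁻¹' K with hK'def
    have hKimg : Subtype.val '' K' = K := by
      apply Subset.antisymm (image_preimage_subset _ _)
      intro z hz
      exact ⟨⟨z, hKC hz⟩, hz, rfl⟩
    have hK'pre : IsPreconnected K' := by
      rw [← Topology.IsInducing.subtypeVal.isPreconnected_image, hKimg]
      exact isPreconnected_connectedComponentIn
    have hK'sub : K' ⊆ g ⁻¹' {g a} := by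
      intro c hc
      have hc' : c.1 ∈ f ⁻¹' {f a.1} := connectedComponentIn_subset (f ⁻¹' {f a.1}) a.1 hc
      have : f c.1 = f a.1 := hc'
      simp only [hgdef, mem_preimage, mem_singleton_iff]
      exact congrArg Prod.snd this
    have haK' : a ∈ K' := mem_connectedComponentIn rfl
    have hmK : m ∈ K := ham
    refine ⟨hKC hmK, ?_⟩
    exact hK'pre.subset_connectedComponentIn haK' hK'sub hmK
  -- the map φ
  refine ⟨Quotient.lift (fun c : C => reebMk f c.1)
      (fun a b hab => Quot.sound (keyA a b hab)), fun c => rfl, ?_⟩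
  -- C is closed
  have hCclosed : IsClosed C := by
    by_cases hne : ∃ x, x ∈ C
    · obtain ⟨x, hx⟩ := hne
      have : C = connectedComponentIn (f₁ ⁻¹' {f₁ x}) x := by
        ext y
        constructor
        · intro hy
          exact Quotient.exact ((show reebMk f₁ x = p₁ from hx).trans
            (show reebMk f₁ y = p₁ from hy).symm)
        · intro hy
          have : reebMk f₁ y = reebMk f₁ x :=
            (Quot.sound (hy : (reebSetoid f₁).r x y)).symm
          show reebMk f₁ y ∈ ({p₁} : Set (ReebQuot f₁))
          rw [this]; exact hx
      rw [this]
      exact isClosed_connectedComponentIn_aux (isClosed_singleton.preimage hf₁) x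
    · have : C = ∅ := eq_empty_iff_forall_notMem.2 (fun x hx => hne ⟨x, hx⟩)
      rw [this]; exact isClosed_empty
  -- closedness
  intro A hA
  have hqA : IsClosed (reebMk g ⁻¹' A) :=
    hA.preimage (continuous_quot_mk : Continuous (Quot.mk _))
  have hB : IsClosed (Subtype.val '' (reebMk g ⁻¹' A)) :=
    hCclosed.isClosedEmbedding_subtypeVal.isClosedMap _ hqA
  have hq : IsQuotientMap (reebMk f) := isQuotientMap_quot_mk
  rw [← hq.isClosed_preimage]
  have heq : reebMk f ⁻¹'
      ((Quotient.lift (fun c : C => reebMk f c.1)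
        (fun a b hab => Quot.sound (keyA a b hab))) '' A)
      = Subtype.val '' (reebMk g ⁻¹' A) := by
    ext m
    constructor
    · rintro ⟨qa, hqa, hφ⟩
      obtain ⟨c, rfl⟩ := Quotient.exists_rep qa
      have hrm : (reebSetoid f).r c.1 m :=
        Quotient.exact (hφ : reebMk f c.1 = reebMk f m)
      obtain ⟨hm, hrel⟩ := keyB c m hrm
      refine ⟨⟨m, hm⟩, ?_, rfl⟩
      show reebMk g ⟨m, hm⟩ ∈ A
      have : reebMk g c = reebMk g ⟨m, hm⟩ := Quot.sound hrel
      rw [← this]; exact hqa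
    · rintro ⟨c, hc, rfl⟩
      exact ⟨reebMk g c, hc, rfl⟩
  exact (congrArg IsClosed heq).mpr hB
end

section
/- Let M be a compact topological space, f = (f₁, f₂) : M → ℝ² continuous, and p₁ ∈ RG_{f₁}. Then the canonical injection φ : RG_{f̃₂} → RS_f is a topological embedding (a homeomorphism onto its image ω₁⁻¹(p₁)). -/
open Set Topology

variable {M : Type*} [TopologicalSpace M]

/-- `connectedComponentIn` of a closed set is closed. -/
theorem isClosed_connectedComponentIn' {s : Set M} {x : M} (hs : IsClosed s) :
    IsClosed (connectedComponentIn s x) := by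
  by_cases hx : x ∈ s
  · rw [connectedComponentIn_eq_image hx]
    exact hs.isClosedEmbedding_subtypeVal.isClosedMap _ isClosed_connectedComponent
  · rw [connectedComponentIn_eq_empty hx]
    exact isClosed_empty

/-- for compact `M`, the canonical injection `φ : RG_{f̃₂} → RS_f` is a
topological embedding, a homeomorphism onto its image `ω₁⁻¹(p₁)`. -/
theorem phi_embedding {M : Type*} [TopologicalSpace M] [CompactSpace M] (f₁ f₂ : M → ℝ)
    (hf₁ : Continuous f₁) (hf₂ : Continuous f₂) (p₁ : ReebQuot f₁) :
    ∃ φ : ReebQuot (fun c : (reebMk f₁ ⁻¹' {p₁} : Set M) => f₂ c.1) → ReebQuot (fun m => (f₁ m, f₂ m)),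
      (∀ c : (reebMk f₁ ⁻¹' {p₁} : Set M), φ (reebMk (fun c : (reebMk f₁ ⁻¹' {p₁} : Set M) => f₂ c.1) c) = reebMk (fun m => (f₁ m, f₂ m)) c.1) ∧ Topology.IsEmbedding φ ∧ Set.range φ = omega1 f₁ f₂ ⁻¹' {p₁} := by
  classical
  set f : M → ℝ × ℝ := fun m => (f₁ m, f₂ m) with hfdef
  set C : Set M := reebMk f₁ ⁻¹' {p₁} with hCdef
  set g : C → ℝ := fun c => f₂ c.1 with hgdef
  -- C is the f₁-fiber-component of each of its points
  have hCc : ∀ c ∈ C, C = connectedComponentIn (f₁ ⁻¹' {f₁ c}) c := by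
    intro c hc
    ext m
    constructor
    · intro hm
      have : reebMk f₁ m = reebMk f₁ c := by
        have h1 : reebMk f₁ m = p₁ := hm
        have h2 : reebMk f₁ c = p₁ := hc
        rw [h1, h2]
      exact (reebSetoid f₁).symm (Quotient.exact this)
    · intro hm
      have : reebMk f₁ c = reebMk f₁ m := Quotient.sound hm
      show reebMk f₁ m = p₁
      rw [← this]; exact hc
  -- f₁ is constant on C
  have hf₁C : ∀ c ∈ C, ∀ c' ∈ C, f₁ c' = f₁ c := by
    intro c hc c' hc'
    have h3 : c' ∈ connectedComponentIn (f₁ ⁻¹' {f₁ c}) c := (hCc c hc) ▸ hc'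
    exact connectedComponentIn_subset (f₁ ⁻¹' {f₁ c}) c h3
  -- C is closed
  have hCclosed : IsClosed C := by
    by_cases hne : C.Nonempty
    · obtain ⟨c, hc⟩ := hne
      rw [hCc c hc]
      exact isClosed_connectedComponentIn' ((isClosed_singleton).preimage hf₁)
    · rw [Set.not_nonempty_iff_eq_empty] at hne
      rw [hne]; exact isClosed_empty
  -- f-fiber-components of points of C stay in C
  have hTsub : ∀ c : C, connectedComponentIn (f ⁻¹' {f c.1}) c.1 ⊆ C := by
    intro c z hz
    show z ∈ C
    rw [hCc c.1 c.2]
    refine connectedComponentIn_mono _ ?_ hz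
    intro w hw
    have : f w = f c.1 := hw
    exact congrArg Prod.fst this
  -- the key equivalence of relations on C
  have hequiv : ∀ c c' : C, (reebSetoid g).r c c' ↔ (reebSetoid f).r c.1 c'.1 := by
    intro c c'
    constructor
    · intro h
      have hS : IsPreconnected (Subtype.val '' connectedComponentIn (g ⁻¹' {g c}) c) :=
        (isPreconnected_connectedComponentIn).image _ continuous_subtype_val.continuousOn
      have hsub : Subtype.val '' connectedComponentIn (g ⁻¹' {g c}) c ⊆ f ⁻¹' {f c.1} := by
        rintro _ ⟨z, hz, rfl⟩
        have h2 : g z = g c := connectedComponentIn_subset (g ⁻¹' {g c}) c hz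
        have h1 : f₁ z.1 = f₁ c.1 := hf₁C c.1 c.2 z.1 z.2
        show f z.1 = f c.1
        exact Prod.ext h1 h2
      have hmem : c.1 ∈ Subtype.val '' connectedComponentIn (g ⁻¹' {g c}) c :=
        ⟨c, mem_connectedComponentIn rfl, rfl⟩
      exact hS.subset_connectedComponentIn hmem hsub ⟨c', h, rfl⟩
    · intro h
      have hTC : connectedComponentIn (f ⁻¹' {f c.1}) c.1 ⊆ C := hTsub c
      have himg : Subtype.val '' (Subtype.val ⁻¹' connectedComponentIn (f ⁻¹' {f c.1}) c.1 : Set C)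
          = connectedComponentIn (f ⁻¹' {f c.1}) c.1 := by
        rw [Set.image_preimage_eq_inter_range, Subtype.range_val,
          Set.inter_eq_self_of_subset_left hTC]
      have hT' : IsPreconnected (Subtype.val ⁻¹' connectedComponentIn (f ⁻¹' {f c.1}) c.1 : Set C) := by
        rw [← IsInducing.subtypeVal.isPreconnected_image, himg]
        exact isPreconnected_connectedComponentIn
      have hsub : (Subtype.val ⁻¹' connectedComponentIn (f ⁻¹' {f c.1}) c.1 : Set C) ⊆ g ⁻¹' {g c} := by
        intro z hz
        have : f z.1 = f c.1 := connectedComponentIn_subset (f ⁻¹' {f c.1}) c.1 hz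
        show g z = g c
        exact congrArg Prod.snd this
      have hcmem : c ∈ (Subtype.val ⁻¹' connectedComponentIn (f ⁻¹' {f c.1}) c.1 : Set C) :=
        mem_connectedComponentIn rfl
      exact hT'.subset_connectedComponentIn hcmem hsub h
  refine ⟨Quotient.lift (fun c : C => reebMk f c.1)
      (fun a b hab => Quotient.sound ((hequiv a b).mp hab)), fun c => rfl, ?_, ?_⟩
  · -- embedding
    have hcont : Continuous (Quotient.lift (fun c : C => reebMk f c.1)
        (fun a b hab => Quotient.sound ((hequiv a b).mp hab))) :=
      continuous_quot_lift _ ((continuous_quot_mk).comp continuous_subtype_val)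
    have hinj : Function.Injective (Quotient.lift (fun c : C => reebMk f c.1)
        (fun a b hab => Quotient.sound ((hequiv a b).mp hab))) := by
      intro a b
      induction a using Quotient.inductionOn with | _ a =>
      induction b using Quotient.inductionOn with | _ b =>
      intro h
      exact Quotient.sound ((hequiv a b).mpr (Quotient.exact h))
    have hclosed : IsClosedMap (Quotient.lift (fun c : C => reebMk f c.1)
        (fun a b hab => Quotient.sound ((hequiv a b).mp hab))) := by
      intro F hF
      have hq : IsQuotientMap (reebMk f) := isQuotientMap_quot_mk
      rw [← hq.isClosed_preimage]
      have key : reebMk f ⁻¹' (Quotient.lift (fun c : C => reebMk f c.1)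
          (fun a b hab => Quotient.sound ((hequiv a b).mp hab)) '' F)
          = Subtype.val '' (reebMk g ⁻¹' F) := by
        ext m
        constructor
        · rintro ⟨y, hy, hy2⟩
          obtain ⟨c, rfl⟩ := Quotient.exists_rep y
          have hr : (reebSetoid f).r c.1 m := Quotient.exact hy2
          have hmC : m ∈ C := hTsub c hr
          refine ⟨⟨m, hmC⟩, ?_, rfl⟩
          show reebMk g ⟨m, hmC⟩ ∈ F
          have hgr : (reebSetoid g).r c ⟨m, hmC⟩ := (hequiv c ⟨m, hmC⟩).mpr hr
          have : reebMk g ⟨m, hmC⟩ = reebMk g c := (Quotient.sound hgr).symm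
          rw [this]
          exact hy
        · rintro ⟨z, hz, rfl⟩
          exact ⟨reebMk g z, hz, rfl⟩
      rw [key]
      exact hCclosed.isClosedEmbedding_subtypeVal.isClosedMap _
        (hF.preimage continuous_quot_mk)
    exact (IsClosedEmbedding.of_continuous_injective_isClosedMap hcont hinj hclosed).toIsEmbedding
  · -- range
    ext z
    constructor
    · rintro ⟨y, rfl⟩
      obtain ⟨c, rfl⟩ := Quotient.exists_rep y
      exact c.2
    · intro hz
      obtain ⟨m, rfl⟩ := Quotient.exists_rep z
      have hmC : m ∈ C := hz
      exact ⟨reebMk g ⟨m, hmC⟩, rfl⟩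
end

section
/- Let f = (f₁, f₂) : M → ℝ² be continuous and let x, y ∈ M lie on the same fiber-component of f, i.e., q_f(x) = q_f(y). Set p = q_{f₁}(x). Then q_{f₁}(x) = q_{f₁}(y) = p and x, y lie on the same connected component of f₂ restricted to q_{f₁}⁻¹(p), i.e., q_{f̃₂ᵖ}(x) = q_{f̃₂ᵖ}(y). Conversely, if q_{f₁}(x) = q_{f₁}(y) = p and q_{f̃₂ᵖ}(x) = q_{f̃₂ᵖ}(y), then q_f(x) = q_f(y). -/
open Set Topology

variable {M : Type*} [TopologicalSpace M]

/-- two points lie on the same fiber-component of `f` iff they agree in the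
first-dimensional Reeb graph and in the corresponding second-dimensional Reeb graph. -/
theorem same_fiberComponent_iff {M : Type*} [TopologicalSpace M] (f₁ f₂ : M → ℝ)
    (hf₁ : Continuous f₁) (hf₂ : Continuous f₂) (x y : M) :
    reebMk (fun m => (f₁ m, f₂ m)) x = reebMk (fun m => (f₁ m, f₂ m)) y ↔
      ∃ hy : y ∈ (reebMk f₁ ⁻¹' {reebMk f₁ x} : Set M),
        reebMk (fun c : (reebMk f₁ ⁻¹' {reebMk f₁ x} : Set M) => f₂ c.1) ⟨x, rfl⟩ =
          reebMk (fun c : (reebMk f₁ ⁻¹' {reebMk f₁ x} : Set M) => f₂ c.1) ⟨y, hy⟩ := by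
  set f : M → ℝ × ℝ := fun m => (f₁ m, f₂ m) with hf
  set C : Set M := reebMk f₁ ⁻¹' {reebMk f₁ x} with hC
  set g : C → ℝ := fun c => f₂ c.1 with hg
  -- every point of C has the same f₁-value as x
  have hCf₁ : ∀ z : M, z ∈ C → f₁ z = f₁ x := by
    intro z hz
    have hr : (reebSetoid f₁).r x z := Quotient.exact (hz : reebMk f₁ z = reebMk f₁ x).symm
    exact connectedComponentIn_subset (f₁ ⁻¹' {f₁ x}) x hr
  constructor
  · intro h
    have hr : (reebSetoid f).r x y := Quotient.exact h
    -- y agrees with x in the first Reeb graph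
    have hy : y ∈ C := by
      have : (reebSetoid f₁).r x y :=
        reeb_descend (fun a b hab => congrArg Prod.fst hab) hr
      exact Quotient.sound this |>.symm
    refine ⟨hy, ?_⟩
    apply Quotient.sound
    -- the fiber component K of f containing x
    set K : Set M := connectedComponentIn (f ⁻¹' {f x}) x with hK
    have hKC : K ⊆ C := by
      intro z hz
      have : (reebSetoid f₁).r x z :=
        reeb_descend (fun a b hab => congrArg Prod.fst hab) hz
      exact (Quotient.sound this).symm
    -- K pulled back to the subtype C
    set K' : Set C := Subtype.val ⁻¹' K with hK'
    have himg : Subtype.val '' K' = K := by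
      rw [hK', Subtype.image_preimage_coe]
      exact inter_eq_right.mpr hKC
    have hK'conn : IsPreconnected K' := by
      rw [← Topology.IsInducing.subtypeVal.isPreconnected_image, himg]
      exact isPreconnected_connectedComponentIn
    have hxK' : (⟨x, rfl⟩ : C) ∈ K' := mem_connectedComponentIn rfl
    have hyK' : (⟨y, hy⟩ : C) ∈ K' := hr
    have hsub : K' ⊆ g ⁻¹' {g ⟨x, rfl⟩} := by
      intro z hz
      have : f z.1 ∈ ({f x} : Set (ℝ × ℝ)) :=
        connectedComponentIn_subset (f ⁻¹' {f x}) x hz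
      exact congrArg Prod.snd this
    exact hK'conn.subset_connectedComponentIn hxK' hsub hyK'
  · rintro ⟨hy, h⟩
    apply Quotient.sound
    have hr : (reebSetoid g).r ⟨x, rfl⟩ ⟨y, hy⟩ := Quotient.exact h
    -- the component in the subtype, pushed to M
    set K' : Set C := connectedComponentIn (g ⁻¹' {g ⟨x, rfl⟩}) ⟨x, rfl⟩ with hK'
    set K : Set M := Subtype.val '' K' with hK
    have hKconn : IsPreconnected K :=
      Topology.IsInducing.subtypeVal.isPreconnected_image.mpr
        isPreconnected_connectedComponentIn
    have hxK : x ∈ K := ⟨⟨x, rfl⟩, mem_connectedComponentIn rfl, rfl⟩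
    have hyK : y ∈ K := ⟨⟨y, hy⟩, hr, rfl⟩
    have hsub : K ⊆ f ⁻¹' {f x} := by
      rintro _ ⟨z, hz, rfl⟩
      have h2 : f₂ z.1 = f₂ x := connectedComponentIn_subset (g ⁻¹' {g ⟨x, rfl⟩}) ⟨x, rfl⟩ hz
      have h1 : f₁ z.1 = f₁ x := hCf₁ z.1 z.2
      show f z.1 ∈ ({f x} : Set (ℝ × ℝ))
      simp [hf, h1, h2]
    exact hKconn.subset_connectedComponentIn hxK hsub hyK
end
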